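/- Let 2 ≤ k ≤ n−2. For j ∈ [n] = {1,…,n}, define the linear functional L_j on ℝ^n by L_j(y) = Σ_{t=1}^{n−1} t · y_{j+t}, where indices are taken modulo n in {1,…,n}. For a k-element subset J of [n], let e_J ∈ ℝ^n be its indicator vector, and define h_J ∈ ℝ^{C(n,k)} by (h_J)_I = (1/n) · min{ L_1(e_I − e_J), …, L_n(e_I − e_J) } for each k-element subset I. Let K(k,n) be the subspace of ℝ^{C(n,k)} consisting of vectors s with Σ_{I : I ∋ j} s_I = 0 for every j ∈ [n]. Then for every frozen subset J, i.e. every cyclic interval J = {i, i+1, …, i+k−1} (indices mod n), and every s ∈ K(k,n), the dot product h_J · s equals 0. -/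

import Mathlib

open scoped Fin.NatCast Fin.IntCast Fin.CommRing

theorem shift17 (n : ℕ) [NeZero n] (y : Fin n → ℝ) (j : Fin n) :
    (∑ t : Fin n, (t.val : ℝ) * y (j + 1 + t))
      = (∑ t : Fin n, (t.val : ℝ) * y (j + t)) + n * y j - ∑ t, y t := by
  have h1 : ∑ t : Fin n, ((t : ℕ) : ℝ) * y (j + t)
      = ∑ u : Fin n, (((u + 1 : Fin n) : ℕ) : ℝ) * y (j + 1 + u) := by
    apply Fintype.sum_equiv (Equiv.addRight (1 : Fin n)).symm
    intro t
    simp [add_assoc, add_comm (1 : Fin n)]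
  have hy : ∑ u : Fin n, y (j + 1 + u) = ∑ t, y t := by
    apply Fintype.sum_equiv (Equiv.addLeft (j + 1 : Fin n))
    intro t
    simp [Equiv.addLeft]
  have key : ∀ u : Fin n, ((u : ℕ) : ℝ)
      = (((u + 1 : Fin n) : ℕ) : ℝ) + ((if u = -1 then (n : ℝ) else 0) - 1) := by
    intro u
    have hval : ((u + 1 : Fin n) : ℕ) = (u.val + 1) % n := by
      simp [Fin.add_def]
    by_cases h : u = -1
    · have h0 : u + 1 = 0 := by rw [h]; ring
      have h0' : ((u + 1 : Fin n) : ℕ) = 0 := by rw [h0]; simp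
      have hn1 : u.val + 1 = n := by
        rw [hval] at h0'
        rcases Nat.lt_or_ge (u.val + 1) n with h' | h'
        · rw [Nat.mod_eq_of_lt h'] at h0'; omega
        · have := u.isLt; omega
      rw [h0', if_pos h]
      have hcast : (n : ℝ) = u.val + 1 := by exact_mod_cast hn1.symm
      rw [hcast]
      push_cast; ring
    · have hlt : u.val + 1 < n := by
        rcases Nat.lt_or_ge (u.val + 1) n with h' | h'
        · exact h'
        · exfalso; apply h
          have hn1 : u.val + 1 = n := by have := u.isLt; omega
          have h0 : u + 1 = 0 := by
            apply Fin.ext; rw [hval, hn1]; simp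
          have := congrArg (fun x => x - 1) h0
          simpa [sub_eq_add_neg] using this
      rw [hval, Nat.mod_eq_of_lt hlt, if_neg h]
      push_cast; ring
  calc ∑ t : Fin n, ((t : ℕ) : ℝ) * y (j + 1 + t)
      = ∑ u : Fin n, ((((u + 1 : Fin n) : ℕ) : ℝ) * y (j + 1 + u)
          + ((if u = -1 then (n : ℝ) * y (j + 1 + u) else 0) - y (j + 1 + u))) := by
        apply Finset.sum_congr rfl
        intro u _
        rw [key u]
        by_cases h : u = -1 <;> simp [h] <;> ring
    _ = (∑ u : Fin n, (((u + 1 : Fin n) : ℕ) : ℝ) * y (j + 1 + u))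
          + ((∑ u : Fin n, if u = -1 then (n : ℝ) * y (j + 1 + u) else 0)
            - ∑ u : Fin n, y (j + 1 + u)) := by
        rw [Finset.sum_add_distrib, Finset.sum_sub_distrib]
    _ = (∑ t : Fin n, ((t : ℕ) : ℝ) * y (j + t)) + n * y j - ∑ t, y t := by
        rw [← h1, hy, Finset.sum_ite_eq' Finset.univ (-1 : Fin n)]
        simp [add_neg_cancel_right]
        ring

theorem iter17 (n : ℕ) [NeZero n] (y : Fin n → ℝ) (hzero : ∑ t, y t = 0)
    (j : Fin n) (m : ℕ) :
    (∑ t : Fin n, (t.val : ℝ) * y (j + (m : Fin n) + t))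
      = (∑ t : Fin n, (t.val : ℝ) * y (j + t))
        + n * ∑ s ∈ Finset.range m, y (j + (s : Fin n)) := by
  induction m with
  | zero => simp
  | succ m ih =>
    have hc : ((m + 1 : ℕ) : Fin n) = (m : Fin n) + 1 := by push_cast; ring
    rw [hc, ← add_assoc, shift17 n y (j + (m : Fin n)), ih, hzero,
      Finset.sum_range_succ]
    ring

/-- for frozen (cyclic-interval) J, the height vector h_J pairs to zero
with every point of the kinematic space K(k,n). -/
theorem stmt_17 (n k : ℕ) (hk : 2 ≤ k) (hkn : k + 2 ≤ n)
    (J : Finset (Fin n))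
    (hfroz : ∃ i : Fin n, J = Finset.image
      (fun t : Fin k => (⟨(i.val + t.val) % n, Nat.mod_lt _ i.pos⟩ : Fin n)) Finset.univ)
    (s : {I : Finset (Fin n) // I.card = k} → ℝ)
    (hs : ∀ j : Fin n, ∑ I : {I : Finset (Fin n) // I.card = k},
      (if j ∈ I.1 then s I else 0) = 0) :
    let L : Fin n → (Fin n → ℝ) → ℝ := fun j y => ∑ t : Fin n, (t.val : ℝ) * y (j + t)
    let ind : Finset (Fin n) → Fin n → ℝ := fun J t => if t ∈ J then 1 else 0
    let h : Finset (Fin n) → {I : Finset (Fin n) // I.card = k} → ℝ := fun J I =>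
      (1 / n) * ⨅ j : Fin n, L j fun t => ind I.1 t - ind J t
    ∑ I : {I : Finset (Fin n) // I.card = k}, h J I * s I = 0 := by
  haveI : NeZero n := ⟨by omega⟩
  obtain ⟨i, hJ⟩ := hfroz
  show (∑ I : {I : Finset (Fin n) // I.card = k},
      ((1 / (n : ℝ)) * ⨅ j : Fin n, ∑ t : Fin n, (t.val : ℝ) *
        ((if (j + t) ∈ I.1 then (1 : ℝ) else 0) - (if (j + t) ∈ J then (1 : ℝ) else 0)))
      * s I) = 0
  -- basic facts
  have hkltn : k < n := by omega
  have hvs : ∀ s' : ℕ, s' < n → ((i + (s' : Fin n)) : Fin n).val = (i.val + s') % n := by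
    intro s' hs'
    rw [Fin.add_def]
    congr 2
    rw [Fin.val_natCast, Nat.mod_eq_of_lt hs']
  have hcancel : ∀ a b : ℕ, a < n → b < n → (i.val + a) % n = (i.val + b) % n → a = b := by
    intro a b ha hb hab
    have : a % n = b % n := Nat.ModEq.add_left_cancel' i.val hab
    rwa [Nat.mod_eq_of_lt ha, Nat.mod_eq_of_lt hb] at this
  have hmem : ∀ s' : ℕ, s' < n → ((i + (s' : Fin n)) ∈ J ↔ s' < k) := by
    intro s' hs'
    rw [hJ]
    simp only [Finset.mem_image, Finset.mem_univ, true_and]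
    constructor
    · rintro ⟨t, ht⟩
      have := congrArg Fin.val ht
      simp only [hvs s' hs'] at this
      have := hcancel t.val s' (lt_of_lt_of_le t.isLt (by omega)) hs' this
      omega
    · intro hsk
      exact ⟨⟨s', hsk⟩, by apply Fin.ext; simp [hvs s' hs']⟩
  have hJcard : J.card = k := by
    rw [hJ, Finset.card_image_of_injective _ ?_, Finset.card_univ, Fintype.card_fin]
    intro a b hab
    have := congrArg Fin.val hab
    simp only at this
    exact Fin.ext (hcancel a.val b.val (by omega) (by omega) this)
  have hsum_ind : ∀ (T : Finset (Fin n)),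
      ∑ t : Fin n, (if t ∈ T then (1 : ℝ) else 0) = T.card := by
    intro T
    rw [Finset.sum_ite_mem, Finset.univ_inter, Finset.sum_const]
    simp
  -- per-I abbreviations
  set y : {I : Finset (Fin n) // I.card = k} → Fin n → ℝ :=
    fun I t => (if t ∈ I.1 then (1 : ℝ) else 0) - (if t ∈ J then (1 : ℝ) else 0) with hy
  have hzero : ∀ I, ∑ t, y I t = 0 := by
    intro I
    rw [hy]
    simp only
    rw [Finset.sum_sub_distrib, hsum_ind, hsum_ind, I.2, hJcard]
    ring
  -- sign facts on y along the interval
  have hterm_le : ∀ I, ∀ s' : ℕ, s' < k → y I (i + (s' : Fin n)) ≤ 0 := by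
    intro I s' hs'
    have hmemJ : (i + (s' : Fin n)) ∈ J := (hmem s' (by omega)).2 hs'
    simp only [hy, hmemJ, if_true]
    split_ifs <;> norm_num
  have hterm_ge : ∀ I, ∀ s' : ℕ, k ≤ s' → s' < n → 0 ≤ y I (i + (s' : Fin n)) := by
    intro I s' hks' hs'
    have hmemJ : (i + (s' : Fin n)) ∉ J := by
      rw [hmem s' hs']; omega
    simp only [hy, hmemJ, if_false]
    split_ifs <;> norm_num
  -- the partial sums
  have hSmono : ∀ I, ∀ m : ℕ, m < n →
      (∑ s' ∈ Finset.range k, y I (i + (s' : Fin n)))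
        ≤ ∑ s' ∈ Finset.range m, y I (i + (s' : Fin n)) := by
    intro I m hm
    rcases le_or_gt m k with hmk | hkm
    · rw [Finset.range_eq_Ico, ← Finset.sum_Ico_consecutive _ (Nat.zero_le m) hmk,
        ← Finset.range_eq_Ico]
      have : (∑ s' ∈ Finset.Ico m k, y I (i + (s' : Fin n))) ≤ 0 := by
        apply Finset.sum_nonpos
        intro s' hs'
        rw [Finset.mem_Ico] at hs'
        exact hterm_le I s' hs'.2
      linarith
    · rw [Finset.range_eq_Ico, Finset.range_eq_Ico, ← Finset.sum_Ico_consecutive _ (Nat.zero_le k) hkm.le,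
        ← Finset.range_eq_Ico]
      have : 0 ≤ ∑ s' ∈ Finset.Ico k m, y I (i + (s' : Fin n)) := by
        apply Finset.sum_nonneg
        intro s' hs'
        rw [Finset.mem_Ico] at hs'
        exact hterm_ge I s' hs'.1 (by omega)
      linarith
  -- the infimum is attained at i + k
  have hinf : ∀ I, (⨅ j : Fin n, ∑ t : Fin n, (t.val : ℝ) * y I (j + t))
      = ∑ t : Fin n, (t.val : ℝ) * y I (i + (k : Fin n) + t) := by
    intro I
    apply le_antisymm
    · exact ciInf_le (Set.Finite.bddBelow (Set.finite_range _)) (i + (k : Fin n))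
    · apply le_ciInf
      intro j
      have hj : j = i + (((j - i).val : ℕ) : Fin n) := by
        rw [Fin.cast_val_eq_self]
        ring
      rw [iter17 n (y I) (hzero I) i k, hj, iter17 n (y I) (hzero I) i (j - i).val]
      have := hSmono I (j - i).val (j - i).isLt
      have hn0 : (0 : ℝ) < n := by exact_mod_cast (by omega : 0 < n)
      nlinarith
  -- A j = 0
  have hA : ∀ j : Fin n,
      ∑ I : {I : Finset (Fin n) // I.card = k}, ((if j ∈ I.1 then (1 : ℝ) else 0) * s I) = 0 := by
    intro j
    calc ∑ I : {I : Finset (Fin n) // I.card = k}, ((if j ∈ I.1 then (1 : ℝ) else 0) * s I)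
        = ∑ I : {I : Finset (Fin n) // I.card = k}, (if j ∈ I.1 then s I else 0) :=
          Finset.sum_congr rfl (fun I _ => by split_ifs <;> simp)
      _ = 0 := hs j
  -- total sum of s is zero
  have htot : ∑ I : {I : Finset (Fin n) // I.card = k}, s I = 0 := by
    have h1 : ∑ j : Fin n, ∑ I : {I : Finset (Fin n) // I.card = k},
        (if j ∈ I.1 then s I else 0) = 0 := by
      simp [hs]
    rw [Finset.sum_comm] at h1
    have h2 : ∀ I : {I : Finset (Fin n) // I.card = k},
        ∑ j : Fin n, (if j ∈ I.1 then s I else 0) = (k : ℝ) * s I := by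
      intro I
      rw [Finset.sum_ite_mem, Finset.univ_inter, Finset.sum_const, I.2]
      simp [nsmul_eq_mul]
    rw [Finset.sum_congr rfl (fun I _ => h2 I), ← Finset.mul_sum] at h1
    have hkne : (k : ℝ) ≠ 0 := by
      have : (0:ℕ) < k := by omega
      exact_mod_cast this.ne'
    exact (mul_eq_zero.mp h1).resolve_left hkne
  -- constants
  set c0 : ℝ := ∑ t : Fin n, (t.val : ℝ) * (if t.val < k then (1 : ℝ) else 0) with hc0
  -- the value of h J I
  have hval : ∀ I : {I : Finset (Fin n) // I.card = k},
      (⨅ j : Fin n, ∑ t : Fin n, (t.val : ℝ) * y I (j + t))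
        = ((∑ t : Fin n, (t.val : ℝ) * (if (i + t) ∈ I.1 then (1 : ℝ) else 0)) - c0)
          + n * ((∑ s' ∈ Finset.range k,
              (if (i + (s' : Fin n)) ∈ I.1 then (1 : ℝ) else 0)) - k) := by
    intro I
    rw [hinf I, iter17 n (y I) (hzero I) i k]
    have hLi : ∑ t : Fin n, (t.val : ℝ) * y I (i + t)
        = (∑ t : Fin n, (t.val : ℝ) * (if (i + t) ∈ I.1 then (1 : ℝ) else 0)) - c0 := by
      have : ∀ t : Fin n, (t.val : ℝ) * y I (i + t)
          = (t.val : ℝ) * (if (i + t) ∈ I.1 then (1 : ℝ) else 0)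
            - (t.val : ℝ) * (if t.val < k then (1 : ℝ) else 0) := by
        intro t
        have ht : i + t = i + ((t.val : ℕ) : Fin n) := by rw [Fin.cast_val_eq_self]
        have hJt : ((i + t) ∈ J) = (t.val < k) := by
          rw [ht]; exact propext (hmem t.val t.isLt)
        simp only [hy, hJt]
        ring
      rw [Finset.sum_congr rfl (fun t _ => this t), Finset.sum_sub_distrib, hc0]
    have hS : ∑ s' ∈ Finset.range k, y I (i + (s' : Fin n))
        = (∑ s' ∈ Finset.range k,
            (if (i + (s' : Fin n)) ∈ I.1 then (1 : ℝ) else 0)) - k := by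
      have : ∀ s' ∈ Finset.range k, y I (i + (s' : Fin n))
          = (if (i + (s' : Fin n)) ∈ I.1 then (1 : ℝ) else 0) - 1 := by
        intro s' hs'
        rw [Finset.mem_range] at hs'
        have hmemJ : (i + (s' : Fin n)) ∈ J := (hmem s' (by omega)).2 hs'
        simp only [hy, hmemJ, if_true]
      rw [Finset.sum_congr rfl this, Finset.sum_sub_distrib, Finset.sum_const,
        Finset.card_range]
      simp
    rw [hLi, hS]
  -- final computation
  have expand : ∀ I : {I : Finset (Fin n) // I.card = k},
      ((1 / (n : ℝ)) * ⨅ j : Fin n, ∑ t : Fin n, (t.val : ℝ) * y I (j + t)) * s I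
        = (1 / (n : ℝ)) *
          ((∑ t : Fin n, (t.val : ℝ) * ((if (i + t) ∈ I.1 then (1 : ℝ) else 0) * s I))
            + (n : ℝ) * (∑ s' ∈ Finset.range k,
                ((if (i + (s' : Fin n)) ∈ I.1 then (1 : ℝ) else 0) * s I))
            + (-c0 - (n : ℝ) * k) * s I) := by
    intro I
    have e1 : ∑ t : Fin n, (t.val : ℝ) * ((if (i + t) ∈ I.1 then (1 : ℝ) else 0) * s I)
        = (∑ t : Fin n, (t.val : ℝ) * (if (i + t) ∈ I.1 then (1 : ℝ) else 0)) * s I := by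
      rw [Finset.sum_mul]
      exact Finset.sum_congr rfl fun t _ => (mul_assoc _ _ _).symm
    have e2 : ∑ s' ∈ Finset.range k, ((if (i + (s' : Fin n)) ∈ I.1 then (1 : ℝ) else 0) * s I)
        = (∑ s' ∈ Finset.range k, (if (i + (s' : Fin n)) ∈ I.1 then (1 : ℝ) else 0)) * s I :=
      (Finset.sum_mul _ _ _).symm
    rw [e1, e2, hval I]
    ring
  rw [Finset.sum_congr rfl (fun I _ => expand I), ← Finset.mul_sum]
  have split : ∑ I : {I : Finset (Fin n) // I.card = k},
      ((∑ t : Fin n, (t.val : ℝ) * ((if (i + t) ∈ I.1 then (1 : ℝ) else 0) * s I))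
        + (n : ℝ) * (∑ s' ∈ Finset.range k,
            ((if (i + (s' : Fin n)) ∈ I.1 then (1 : ℝ) else 0) * s I))
        + (-c0 - (n : ℝ) * k) * s I) = 0 := by
    rw [Finset.sum_add_distrib, Finset.sum_add_distrib, ← Finset.mul_sum, ← Finset.mul_sum]
    have p1 : ∑ I : {I : Finset (Fin n) // I.card = k},
        ∑ t : Fin n, (t.val : ℝ) * ((if (i + t) ∈ I.1 then (1 : ℝ) else 0) * s I) = 0 := by
      rw [Finset.sum_comm]
      apply Finset.sum_eq_zero
      intro t _
      rw [← Finset.mul_sum, hA (i + t), mul_zero]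
    have p2 : ∑ I : {I : Finset (Fin n) // I.card = k},
        ∑ s' ∈ Finset.range k, ((if (i + (s' : Fin n)) ∈ I.1 then (1 : ℝ) else 0) * s I) = 0 := by
      rw [Finset.sum_comm]
      apply Finset.sum_eq_zero
      intro s' _
      exact hA (i + (s' : Fin n))
    rw [p1, p2, htot]
    ring
  rw [split, mul_zero]
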